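/- For every n ≥ 1, every 1 ≤ i ≤ n and every subset B ⊆ {1,…,n}, the inflated permutation D_i(σ_B) ∈ 𝔖_{n+1} is again a shuffle permutation; explicitly, D_i(σ_B) = σ_{B′_i(B)} where B′_i(B) = {b ∈ B : b < i} ∪ {b+1 : b ∈ B, b > i} ∪ ({i, i+1} if i ∈ B, and ∅ otherwise). -/

import Mathlib

/-- The shuffle permutation `σ_A` associated to a subset `A ⊆ {1,…,n}`:
positions `1,…,|A|` are sent, in order, to the elements of `A` listed increasingly,
and positions `|A|+1,…,n` are sent, in order, to the elements of the complement of `A`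
listed increasingly.  (Here everything is 0-indexed, using `Fin n`.) -/
def shufflePerm {n : ℕ} (A : Finset (Fin n)) : Equiv.Perm (Fin n) :=
  (finCongr (show n = A.card + Aᶜ.card from by
      have h1 : A.card ≤ n := by simpa using Finset.card_le_univ A
      have h2 : Aᶜ.card = n - A.card := by simp [Finset.card_compl]
      omega)).trans <|
  finSumFinEquiv.symm.trans <|
  (Equiv.sumCongr (A.orderIsoOfFin rfl).toEquiv
      ((Aᶜ.orderIsoOfFin rfl).toEquiv.trans
        (Equiv.subtypeEquivRight fun _ => Finset.mem_compl))).trans <|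
  Equiv.sumCompl (· ∈ A)

/-- The inflation `D_i(σ) ∈ 𝔖_{n+1}` of a permutation `σ ∈ 𝔖_n`: in the one-line word of
`σ`, every letter `ℓ > i` is replaced by `ℓ+1` and the letter `i` is replaced by the two
consecutive letters `i, i+1`.  (0-indexed: `i : Fin n`, and the two consecutive letters are
`i.castSucc, i.succ` in `Fin (n+1)`.)  This is the operadic composition `σ ∘_i m_2` in the
associative operad. -/
def inflate {n : ℕ} (σ : Equiv.Perm (Fin n)) (i : Fin n) : Equiv.Perm (Fin (n + 1)) :=
  (finSuccEquiv' ((σ⁻¹ i).succ)).trans ((Equiv.optionCongr σ).trans (finSuccEquiv' i.succ).symm)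

/-- The subset `B′_i(B) ⊆ {1,…,n+1}`: elements of `B` below `i` are kept, elements of `B`
above `i` are shifted up by one, and if `i ∈ B` then both `i` and `i+1` are included.
(0-indexed via `Fin.castSucc` and `Fin.succ`.) -/
def inflateSet {n : ℕ} (B : Finset (Fin n)) (i : Fin n) : Finset (Fin (n + 1)) :=
  ((B.filter (· < i)).image Fin.castSucc) ∪ ((B.filter (i < ·)).image Fin.succ) ∪
    (if i ∈ B then {i.castSucc, i.succ} else ∅)

/-- The shuffle element `sh_n = ∑_{A ⊆ {1,…,n}} σ_A` of the integral group algebra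
`ℤ[𝔖_n]`. -/
noncomputable def sh (n : ℕ) : MonoidAlgebra ℤ (Equiv.Perm (Fin n)) :=
  ∑ A : Finset (Fin n), MonoidAlgebra.of ℤ (Equiv.Perm (Fin n)) (shufflePerm A)

lemma card_add_card_compl {n : ℕ} (A : Finset (Fin n)) : A.card + Aᶜ.card = n := by
  have h1 : A.card ≤ n := by simpa using Finset.card_le_univ A
  have h2 : Aᶜ.card = n - A.card := by simp [Finset.card_compl]
  omega

lemma shufflePerm_apply_lt {n : ℕ} (A : Finset (Fin n)) (k : Fin n) (h : (k : ℕ) < A.card) :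
    shufflePerm A k = A.orderIsoOfFin rfl ⟨k, h⟩ := by
  have this : finSumFinEquiv.symm
      (finCongr (show n = A.card + Aᶜ.card from (card_add_card_compl A).symm) k)
      = Sum.inl ⟨k, h⟩ := by
    rw [show (finCongr (show n = A.card + Aᶜ.card from (card_add_card_compl A).symm) k)
        = Fin.castAdd Aᶜ.card ⟨k, h⟩ from by ext; simp]
    exact finSumFinEquiv_symm_apply_castAdd _
  rw [finCongr_apply] at this
  simp only [shufflePerm, Equiv.trans_apply, finCongr_apply, this]
  simp

lemma sub_lt_card_compl {n : ℕ} (A : Finset (Fin n)) (k : Fin n) (h : A.card ≤ (k : ℕ)) :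
    (k : ℕ) - A.card < Aᶜ.card := by
  have := card_add_card_compl A; have := k.isLt; omega

lemma shufflePerm_apply_ge {n : ℕ} (A : Finset (Fin n)) (k : Fin n) (h : A.card ≤ (k : ℕ)) :
    shufflePerm A k = Aᶜ.orderIsoOfFin rfl ⟨k - A.card, sub_lt_card_compl A k h⟩ := by
  have this : finSumFinEquiv.symm
      (finCongr (show n = A.card + Aᶜ.card from (card_add_card_compl A).symm) k)
      = Sum.inr ⟨k - A.card, sub_lt_card_compl A k h⟩ := by
    rw [show (finCongr (show n = A.card + Aᶜ.card from (card_add_card_compl A).symm) k)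
        = Fin.natAdd A.card ⟨k - A.card, sub_lt_card_compl A k h⟩ from by ext; simp; omega]
    exact finSumFinEquiv_symm_apply_natAdd _
  rw [finCongr_apply] at this
  simp only [shufflePerm, Equiv.trans_apply, finCongr_apply, this]
  simp

lemma shufflePerm_mem_iff {n : ℕ} (A : Finset (Fin n)) (k : Fin n) :
    shufflePerm A k ∈ A ↔ (k : ℕ) < A.card := by
  rcases lt_or_ge (k : ℕ) A.card with h | h
  · simp only [shufflePerm_apply_lt A k h, h, iff_true]
    exact (A.orderIsoOfFin rfl ⟨k, h⟩).2
  · simp only [shufflePerm_apply_ge A k h]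
    have := (Aᶜ.orderIsoOfFin rfl ⟨k - A.card, sub_lt_card_compl A k h⟩).2
    rw [Finset.mem_compl, Finset.coe_orderIsoOfFin_apply] at this
    simp [this, not_lt.mpr h]

lemma shufflePerm_mono {n : ℕ} (A : Finset (Fin n)) (k l : Fin n) (hkl : k < l)
    (hmem : (shufflePerm A k ∈ A ↔ shufflePerm A l ∈ A)) :
    shufflePerm A k < shufflePerm A l := by
  rcases lt_or_ge (l : ℕ) A.card with hl | hl
  · have hk : (k : ℕ) < A.card := lt_trans (by exact_mod_cast hkl) hl
    rw [shufflePerm_apply_lt A k hk, shufflePerm_apply_lt A l hl]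
    have : (⟨(k : ℕ), hk⟩ : Fin A.card) < ⟨(l : ℕ), hl⟩ := by exact_mod_cast hkl
    exact_mod_cast (A.orderIsoOfFin rfl).strictMono this
  · have hk : A.card ≤ (k : ℕ) := by
      by_contra hc
      push_neg at hc
      rw [shufflePerm_mem_iff, shufflePerm_mem_iff] at hmem
      omega
    rw [shufflePerm_apply_ge A k hk, shufflePerm_apply_ge A l hl]
    have : (⟨(k : ℕ) - A.card, sub_lt_card_compl A k hk⟩ : Fin Aᶜ.card)
        < ⟨(l : ℕ) - A.card, sub_lt_card_compl A l hl⟩ := by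
      simp only [Fin.mk_lt_mk]
      have : (k : ℕ) < l := hkl
      omega
    exact_mod_cast (Aᶜ.orderIsoOfFin rfl).strictMono this

/-- Uniqueness: any permutation with the right membership pattern and monotone on blocks
is the shuffle permutation. -/
lemma eq_shufflePerm {n : ℕ} (A : Finset (Fin n)) (τ : Equiv.Perm (Fin n))
    (hmem : ∀ k : Fin n, τ k ∈ A ↔ (k : ℕ) < A.card)
    (hmono : ∀ k l : Fin n, k < l → (τ k ∈ A ↔ τ l ∈ A) → τ k < τ l) :
    τ = shufflePerm A := by
  ext k
  rcases lt_or_ge (k : ℕ) A.card with h | h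
  · have hcard : A.card ≤ n := by simpa using Finset.card_le_univ A
    set f : Fin A.card → Fin n := fun j => τ ⟨j, lt_of_lt_of_le j.isLt hcard⟩ with hf
    have hfs : ∀ x, f x ∈ A := by
      intro x; rw [hf, hmem]; exact x.isLt
    have hsm : StrictMono f := by
      intro a b hab
      exact hmono _ _ (by exact_mod_cast hab) (by rw [hmem, hmem]; simp [a.isLt, b.isLt])
    have := Finset.orderEmbOfFin_unique rfl hfs hsm
    have hk : τ k = f ⟨k, h⟩ := by simp [hf]
    rw [hk, this, shufflePerm_apply_lt A k h, Finset.coe_orderIsoOfFin_apply]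
  · have hn := card_add_card_compl A
    set f : Fin Aᶜ.card → Fin n := fun j => τ ⟨A.card + j, by have := j.isLt; omega⟩ with hf
    have hfs : ∀ x, f x ∈ Aᶜ := by
      intro x; rw [hf, Finset.mem_compl, hmem]; simp
    have hsm : StrictMono f := by
      intro a b hab
      refine hmono _ _ (by simp only [Fin.mk_lt_mk]; exact_mod_cast Nat.add_lt_add_left hab _) ?_
      have h1 := hfs a; have h2 := hfs b
      rw [Finset.mem_compl] at h1 h2
      rw [hf] at h1 h2; simp [h1, h2]
    have := Finset.orderEmbOfFin_unique rfl hfs hsm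
    have hk : τ k = f ⟨k - A.card, sub_lt_card_compl A k h⟩ := by
      rw [hf]; congr 1; ext; simp; omega
    rw [hk, this, shufflePerm_apply_ge A k h, Finset.coe_orderIsoOfFin_apply]

lemma inflate_apply_succAbove {n : ℕ} (σ : Equiv.Perm (Fin n)) (i : Fin n) (j : Fin n) :
    inflate σ i ((σ⁻¹ i).succ.succAbove j) = i.succ.succAbove (σ j) := by
  simp [inflate, finSuccEquiv'_succAbove, finSuccEquiv'_symm_some]

lemma inflate_apply_pivot {n : ℕ} (σ : Equiv.Perm (Fin n)) (i : Fin n) :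
    inflate σ i ((σ⁻¹ i).succ) = i.succ := by
  simp [inflate]

lemma inflateSet_eq {n : ℕ} (B : Finset (Fin n)) (i : Fin n) :
    inflateSet B i = B.image (i.succ.succAbove) ∪ (if i ∈ B then {i.succ} else ∅) := by
  ext x
  simp only [inflateSet, Finset.mem_union, Finset.mem_image, Finset.mem_filter]
  constructor
  · rintro ((⟨b, ⟨hb, hbi⟩, rfl⟩ | ⟨b, ⟨hb, hbi⟩, rfl⟩) | hx)
    · exact Or.inl ⟨b, hb, Fin.succAbove_of_castSucc_lt _ _ (by
        simp [Fin.lt_def]; omega)⟩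
    · exact Or.inl ⟨b, hb, Fin.succAbove_of_le_castSucc _ _ (by
        simp [Fin.le_def]; omega)⟩
    · by_cases hiB : i ∈ B
      · simp only [hiB, if_true, Finset.mem_insert, Finset.mem_singleton] at hx
        rcases hx with rfl | rfl
        · exact Or.inl ⟨i, hiB, Fin.succAbove_of_castSucc_lt _ _ (by
            simp [Fin.lt_def])⟩
        · right; simp [hiB]
      · simp [hiB] at hx
  · rintro (⟨b, hb, rfl⟩ | hx)
    · rcases lt_trichotomy b i with hbi | rfl | hbi
      · left; left
        exact ⟨b, ⟨hb, hbi⟩, (Fin.succAbove_of_castSucc_lt _ _ (by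
          simp [Fin.lt_def]; omega)).symm⟩
      · right
        rw [Fin.succAbove_of_castSucc_lt _ _ (by simp [Fin.lt_def])]
        simp [hb]
      · left; right
        exact ⟨b, ⟨hb, hbi⟩, (Fin.succAbove_of_le_castSucc _ _ (by
          simp [Fin.le_def]; omega)).symm⟩
    · by_cases hiB : i ∈ B
      · simp only [hiB, if_true, Finset.mem_singleton] at hx
        right; simp [hiB, hx]
      · simp [hiB] at hx

lemma mem_inflateSet_succAbove {n : ℕ} (B : Finset (Fin n)) (i : Fin n) (x : Fin n) :
    i.succ.succAbove x ∈ inflateSet B i ↔ x ∈ B := by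
  rw [inflateSet_eq]
  simp only [Finset.mem_union, Finset.mem_image]
  constructor
  · rintro (⟨b, hb, he⟩ | hx)
    · rwa [(Fin.succAbove_right_injective (p := i.succ)) he] at hb
    · by_cases hiB : i ∈ B
      · simp only [hiB, if_true, Finset.mem_singleton] at hx
        exact absurd hx (Fin.succAbove_ne _ _)
      · simp [hiB] at hx
  · intro hx; exact Or.inl ⟨x, hx, rfl⟩

lemma succ_mem_inflateSet {n : ℕ} (B : Finset (Fin n)) (i : Fin n) :
    i.succ ∈ inflateSet B i ↔ i ∈ B := by
  rw [inflateSet_eq]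
  simp only [Finset.mem_union, Finset.mem_image]
  constructor
  · rintro (⟨b, hb, he⟩ | hx)
    · exact absurd he (Fin.succAbove_ne _ _)
    · by_cases hiB : i ∈ B
      · exact hiB
      · simp [hiB] at hx
  · intro hx; right; simp [hx]

lemma card_inflateSet {n : ℕ} (B : Finset (Fin n)) (i : Fin n) :
    (inflateSet B i).card = B.card + (if i ∈ B then 1 else 0) := by
  rw [inflateSet_eq]
  rw [Finset.card_union_of_disjoint]
  · rw [Finset.card_image_of_injective _ (Fin.succAbove_right_injective (p := i.succ))]
    by_cases hiB : i ∈ B <;> simp [hiB]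
  · rw [Finset.disjoint_right]
    intro x hx hx'
    by_cases hiB : i ∈ B
    · simp only [hiB, if_true, Finset.mem_singleton] at hx
      subst hx
      rw [Finset.mem_image] at hx'
      obtain ⟨b, _, he⟩ := hx'
      exact Fin.succAbove_ne _ _ he
    · simp [hiB] at hx

lemma val_succAbove {n : ℕ} (p : Fin (n + 1)) (j : Fin n) :
    ((p.succAbove j : Fin (n + 1)) : ℕ) = if (j : ℕ) < (p : ℕ) then (j : ℕ) else (j : ℕ) + 1 := by
  rcases lt_or_ge (j.castSucc) p with h | h
  · rw [Fin.succAbove_of_castSucc_lt _ _ h]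
    have : (j : ℕ) < (p : ℕ) := h
    simp [this]
  · rw [Fin.succAbove_of_le_castSucc _ _ h]
    have : (p : ℕ) ≤ (j : ℕ) := h
    simp [not_lt.mpr this]


/-- The inflation `D_i(σ_B)` of a shuffle permutation is again a shuffle
permutation, namely the one associated to the subset `B′_i(B)`. -/
theorem inflate_shufflePerm {n : ℕ} (i : Fin n) (B : Finset (Fin n)) :
    inflate (shufflePerm B) i = shufflePerm (inflateSet B i) := by
  set σ := shufflePerm B with hσ
  set m := σ⁻¹ i with hm
  have hσm : σ m = i := by rw [hm]; exact Equiv.apply_symm_apply σ i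
  have hmB : (m : ℕ) < B.card ↔ i ∈ B := by
    rw [← hσm, hσ, shufflePerm_mem_iff]
  have hcard := card_inflateSet B i
  apply eq_shufflePerm
  · -- membership
    intro k
    rw [hcard]
    by_cases hk : k = m.succ
    · subst hk
      rw [inflate_apply_pivot, succ_mem_inflateSet]
      have : ((m.succ : Fin (n+1)) : ℕ) = (m : ℕ) + 1 := rfl
      rw [this]
      by_cases hiB : i ∈ B
      · have h1 : (m : ℕ) < B.card := hmB.mpr hiB
        simp only [hiB, if_true, true_iff]
        omega
      · have h1 : ¬ (m : ℕ) < B.card := fun h => hiB (hmB.mp h)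
        simp only [hiB, if_false, false_iff]
        omega
    · obtain ⟨j, rfl⟩ := Fin.exists_succAbove_eq (Ne.intro hk)
      rw [inflate_apply_succAbove, mem_inflateSet_succAbove]
      have hj : shufflePerm B j ∈ B ↔ (j : ℕ) < B.card := shufflePerm_mem_iff B j
      rw [hj]
      have hv := val_succAbove m.succ j
      have hms : ((m.succ : Fin (n+1)) : ℕ) = (m : ℕ) + 1 := rfl
      rw [hms] at hv
      by_cases hiB : i ∈ B
      · have h1 : (m : ℕ) < B.card := hmB.mpr hiB
        simp only [hiB, if_true]
        rw [hv]; split <;> omega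
      · have h1 : ¬ (m : ℕ) < B.card := fun h => hiB (hmB.mp h)
        simp only [hiB, if_false]
        rw [hv]; split <;> omega
  · -- monotonicity
    intro k l hkl hmem
    by_cases hk : k = m.succ
    · subst hk
      have hl : l ≠ m.succ := fun h => absurd (h ▸ hkl) (lt_irrefl _)
      obtain ⟨j, rfl⟩ := Fin.exists_succAbove_eq hl
      rw [inflate_apply_pivot, inflate_apply_succAbove] at *
      rw [succ_mem_inflateSet, mem_inflateSet_succAbove] at hmem
      -- k < l means m < j
      have hmj : m < j := by
        have hv := val_succAbove m.succ j
        have : ((m.succ : Fin (n+1)) : ℕ) < ((m.succ.succAbove j) : ℕ) := hkl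
        rw [hv] at this
        simp only [Fin.lt_def]
        have hms : ((m.succ : Fin (n+1)) : ℕ) = (m : ℕ) + 1 := rfl
        rw [hms] at this
        split at this <;> omega
      have hσlt : i < σ j := by
        have := shufflePerm_mono B m j hmj (by rw [← hσ, hσm]; tauto)
        rwa [← hσ, hσm] at this
      rw [Fin.succAbove_of_le_castSucc _ _ (by
        simp only [Fin.le_def, Fin.coe_castSucc, Fin.val_succ]
        exact hσlt)]
      simp only [Fin.lt_def, Fin.val_succ]
      exact Nat.add_lt_add_right hσlt 1
    · obtain ⟨j, rfl⟩ := Fin.exists_succAbove_eq (Ne.intro hk)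
      by_cases hl : l = m.succ
      · subst hl
        rw [inflate_apply_pivot, inflate_apply_succAbove] at *
        rw [succ_mem_inflateSet, mem_inflateSet_succAbove] at hmem
        -- k < l means j ≤ m
        have hjm : (j : ℕ) ≤ (m : ℕ) := by
          have hv := val_succAbove m.succ j
          have : ((m.succ.succAbove j) : ℕ) < ((m.succ : Fin (n+1)) : ℕ) := hkl
          rw [hv] at this
          have hms : ((m.succ : Fin (n+1)) : ℕ) = (m : ℕ) + 1 := rfl
          rw [hms] at this
          split at this <;> omega
        rcases eq_or_lt_of_le hjm with heq | hlt
        · have : j = m := Fin.ext heq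
          subst this
          rw [hσm]
          rw [Fin.succAbove_of_castSucc_lt _ _ (Fin.castSucc_lt_succ : i.castSucc < i.succ)]
          exact Fin.castSucc_lt_succ
        · have hmj : j < m := hlt
          have hσlt : σ j < i := by
            have := shufflePerm_mono B j m hmj (by rw [← hσ, hσm]; tauto)
            rwa [← hσ, hσm] at this
          rw [Fin.succAbove_of_castSucc_lt _ _ (by
            simp only [Fin.lt_def, Fin.coe_castSucc, Fin.val_succ]
            omega)]
          simp only [Fin.lt_def, Fin.coe_castSucc, Fin.val_succ]
          omega
      · obtain ⟨j', rfl⟩ := Fin.exists_succAbove_eq (Ne.intro hl)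
        rw [inflate_apply_succAbove, inflate_apply_succAbove] at *
        rw [mem_inflateSet_succAbove, mem_inflateSet_succAbove] at hmem
        have hjj' : j < j' := Fin.succAbove_lt_succAbove_iff.mp hkl
        have := shufflePerm_mono B j j' hjj' (by rw [← hσ]; exact hmem)
        rw [← hσ] at this
        exact Fin.succAbove_lt_succAbove_iff.mpr this
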